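/- Let L be a finite-dimensional Lie algebra with nilpotent derived algebra ⁅L, L⁆, and let A be a minimal Lie ideal of L (a nonzero Lie ideal containing no Lie ideal of L other than 0 and itself). Then ⁅⁅L, L⁆, A⁆ = 0. -/

import Mathlib

/-- If `L` is a finite-dimensional Lie algebra with nilpotent derived algebra
and `A` is a minimal Lie ideal of `L`, then `⁅⁅L, L⁆, A⁆ = 0`. -/
theorem derived_bracket_minimal_ideal_eq_zero
    (K : Type*) (L : Type*) [Field K]
    [LieRing L] [LieAlgebra K L] [FiniteDimensional K L]
    (hL : LieRing.IsNilpotent (LieAlgebra.derivedSeries K L 1))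
    (A : LieIdeal K L) (hA : IsAtom A) :
    ∀ u ∈ LieAlgebra.derivedSeries K L 1, ∀ a ∈ A, ⁅u, a⁆ = 0 := by
  set I : LieIdeal K L := LieAlgebra.derivedSeries K L 1 with hI
  set B : LieIdeal K L := ⁅I, A⁆ with hB
  have hBA : B ≤ A := LieSubmodule.lie_le_right A I
  by_cases hbot : B = ⊥
  · intro u hu a ha
    have : ⁅u, a⁆ ∈ B := LieSubmodule.lie_mem_lie hu ha
    rw [hbot] at this
    exact this
  · exfalso
    -- B = A by atomicity
    have hBAeq : B = A := by
      rcases lt_or_eq_of_le hBA with h | h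
      · exact absurd (hA.2 _ h) hbot
      · exact h
    have hAI : A ≤ I := hBAeq ▸ LieSubmodule.lie_le_left I A
    -- A is contained in image of every term of the lower central series of I
    set S : ℕ → Submodule K L :=
      fun k => Submodule.map (I : Submodule K L).subtype
        (LieModule.lowerCentralSeries K I I k : Submodule K I) with hS
    have key : ∀ k, (A : Submodule K L) ≤ S k := by
      intro k
      induction k with
      | zero =>
        intro a ha
        exact ⟨⟨a, hAI ha⟩, trivial, rfl⟩
      | succ k ih =>
        intro a ha
        have ha' : a ∈ B := hBAeq ▸ ha
        have ha2 : a ∈ Submodule.span K { m | ∃ x ∈ I, ∃ n ∈ A, ⁅x, n⁆ = m } := by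
          rw [← LieSubmodule.lieIdeal_oper_eq_linear_span']
          exact ha'
        have hspan : Submodule.span K { m | ∃ x ∈ I, ∃ n ∈ A, ⁅x, n⁆ = m } ≤ S (k + 1) := by
          refine Submodule.span_le.mpr ?_
          rintro _ ⟨x, hx, m, hm, rfl⟩
          rcases ih hm with ⟨m', hm', rfl⟩
          refine ⟨(⁅(⟨x, hx⟩ : I), (⟨m'.1, m'.2⟩ : I)⁆ : I), ?_, rfl⟩
          rw [LieModule.lowerCentralSeries_succ]
          exact LieSubmodule.lie_mem_lie (M := I) (x := (⟨x, hx⟩ : I)) (m := (⟨m'.1, m'.2⟩ : I)) (LieSubmodule.mem_top _) hm'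
        exact hspan ha2
    obtain ⟨n, hn⟩ := (LieModule.isNilpotent_iff K I I).mp hL
    have : (A : Submodule K L) ≤ S n := key n
    rw [hS] at this
    simp only [hn] at this
    have hAbot : A = ⊥ := by
      rw [LieSubmodule.eq_bot_iff]
      intro m hm
      have := this hm
      simpa using this
    exact hA.1 hAbot
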